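/- Let t ≥ 1, ℓ ≥ 1 with 2^ℓ > t+1, and w ≥ 1. The number of binary ℓ×w arrays satisfying the window constraint (every two columns at distance at most t are distinct) is at least 2^{ℓw} · (1 − (t+1)/2^ℓ)^w; hence the redundancy ℓw − log₂|W_{ℓ,w}| is at most −w·log₂(1 − (t+1)/2^ℓ). -/

import Mathlib

/-- Binary `ℓ × w` arrays (given by their columns) satisfying the window constraint. -/
def WindowSet (t ℓ w : ℕ) : Set (Fin w → (Fin ℓ → Bool)) :=
  {W | ∀ i j : Fin w, (i : ℕ) < w - t → (i : ℕ) < (j : ℕ) → (j : ℕ) ≤ (i : ℕ) + t → W i ≠ W j}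

open Finset

/-- Arrays satisfying the stronger constraint (no restriction `i < w - t`). -/
def strongSet (t ℓ w : ℕ) : Finset (Fin w → (Fin ℓ → Bool)) :=
  Finset.univ.filter
    (fun W => ∀ i j : Fin w, (i : ℕ) < (j : ℕ) → (j : ℕ) ≤ (i : ℕ) + t → W i ≠ W j)

lemma strongSet_card (t ℓ : ℕ) : ∀ w, (2 ^ ℓ - t) ^ w ≤ (strongSet t ℓ w).card := by
  intro w
  induction w with
  | zero =>
    simp [strongSet]
  | succ w ih =>
    set r : (Fin (w + 1) → (Fin ℓ → Bool)) → (Fin w → (Fin ℓ → Bool)) :=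
      fun W => W ∘ Fin.castSucc with hr
    have hmap : ∀ W ∈ strongSet t ℓ (w + 1), r W ∈ strongSet t ℓ w := by
      intro W hW
      simp only [strongSet, mem_filter, mem_univ, true_and] at hW ⊢
      intro i j hij hjt
      exact hW i.castSucc j.castSucc (by simpa using hij) (by simpa using hjt)
    have hcardsum := Finset.card_eq_sum_card_fiberwise hmap
    -- fiber bound
    have hfiber : ∀ y ∈ strongSet t ℓ w,
        2 ^ ℓ - t ≤ ((strongSet t ℓ (w + 1)).filter (fun W => r W = y)).card := by
      intro y hy
      simp only [strongSet, mem_filter, mem_univ, true_and] at hy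
      set Bad : Finset (Fin ℓ → Bool) :=
        (Finset.univ.filter (fun i : Fin w => w ≤ (i : ℕ) + t)).image y with hBad
      have hBadcard : Bad.card ≤ t := by
        have h1 : Bad.card ≤ (Finset.univ.filter (fun i : Fin w => w ≤ (i : ℕ) + t)).card :=
          Finset.card_image_le
      -- the index set has at most t elements
        have h2 : (Finset.univ.filter (fun i : Fin w => w ≤ (i : ℕ) + t)).card
            ≤ (Finset.range t).card := by
          refine Finset.card_le_card_of_injOn (fun i => (i : ℕ) + t - w) ?_ ?_
          · intro i hi
            simp only [mem_filter, mem_univ, true_and, Finset.mem_coe] at hi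
            have := i.isLt
            simp only [Finset.mem_range, Finset.mem_coe]
            omega
          · intro i hi j hj hij
            simp only [mem_filter, mem_univ, true_and, Finset.mem_coe] at hi hj
            have hi' := i.isLt
            have hj' := j.isLt
            have hij' : (i : ℕ) + t - w = (j : ℕ) + t - w := hij
            apply Fin.ext
            omega
        simpa using h1.trans h2
      have hGood : 2 ^ ℓ - t ≤ (Finset.univ \ Bad).card := by
        have : (Finset.univ \ Bad).card = Fintype.card (Fin ℓ → Bool) - Bad.card := by
          rw [Finset.card_sdiff_of_subset (Finset.subset_univ _), Finset.card_univ]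
        rw [this]
        have hcard : Fintype.card (Fin ℓ → Bool) = 2 ^ ℓ := by
          simp [Fintype.card_fun]
        omega
      refine le_trans hGood ?_
      refine Finset.card_le_card_of_injOn
        (fun c => (Fin.snoc y c : Fin (w + 1) → (Fin ℓ → Bool))) ?_ ?_
      · intro c hc
        simp only [Finset.mem_sdiff, Finset.mem_univ, true_and, hBad, Finset.mem_image,
          mem_filter, Finset.mem_coe] at hc
        simp only [strongSet, mem_filter, mem_univ, true_and, Finset.mem_coe]
        constructor
        · intro i j hij hjt
          have hi : (i : ℕ) < w := by
            have := j.isLt; omega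
          rcases lt_or_eq_of_le (Nat.lt_succ_iff.mp j.isLt) with hjw | hjw
          · -- both in the first w columns
            have hi' : i = Fin.castSucc ⟨i, hi⟩ := by ext; simp
            have hj' : j = Fin.castSucc ⟨j, hjw⟩ := by ext; simp
            rw [hi', hj', Fin.snoc_castSucc, Fin.snoc_castSucc]
            exact hy ⟨i, hi⟩ ⟨j, hjw⟩ (by simpa using hij) (by simpa using hjt)
          · -- j is the last column
            have hj' : j = Fin.last w := by ext; simp [hjw]
            have hi' : i = Fin.castSucc ⟨i, hi⟩ := by ext; simp
            rw [hj', hi', Fin.snoc_castSucc, Fin.snoc_last]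
            intro h
            exact hc ⟨⟨i, hi⟩, ⟨by simp; omega, h⟩⟩
        · funext i
          simp [hr, Fin.snoc_castSucc]
      · intro c _ c' _ h
        have := congrFun h (Fin.last w)
        simpa [Fin.snoc_last] using this
    calc (2 ^ ℓ - t) ^ (w + 1) = (2 ^ ℓ - t) ^ w * (2 ^ ℓ - t) := pow_succ _ _
      _ ≤ (strongSet t ℓ w).card * (2 ^ ℓ - t) := Nat.mul_le_mul_right _ ih
      _ = ∑ _y ∈ strongSet t ℓ w, (2 ^ ℓ - t) := by
          rw [Finset.sum_const, smul_eq_mul, mul_comm]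
      _ ≤ ∑ y ∈ strongSet t ℓ w,
            ((strongSet t ℓ (w + 1)).filter (fun W => r W = y)).card :=
          Finset.sum_le_sum hfiber
      _ = (strongSet t ℓ (w + 1)).card := hcardsum.symm

/-- `|W_{ℓ,w}| ≥ 2^{ℓw}·(1 − (t+1)/2^ℓ)^w`, hence the redundancy
`ℓw − log₂ |W_{ℓ,w}|` is at most `−w·log₂(1 − (t+1)/2^ℓ)`. -/
theorem windowSet_card_and_redundancy (t ℓ w : ℕ) (ht : 1 ≤ t) (hl : 1 ≤ ℓ)
    (hw : 1 ≤ w) (h2 : t + 1 < 2 ^ ℓ) :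
    (2 : ℝ) ^ (ℓ * w) * (1 - (t + 1) / 2 ^ ℓ) ^ w ≤ (Nat.card ↥(WindowSet t ℓ w) : ℝ) ∧
    (ℓ * w : ℝ) - Real.logb 2 (Nat.card ↥(WindowSet t ℓ w)) ≤
      -(w * Real.logb 2 (1 - (t + 1) / 2 ^ ℓ)) := by
  have hsub : (↑(strongSet t ℓ w) : Set (Fin w → (Fin ℓ → Bool))) ⊆ WindowSet t ℓ w := by
    intro W hW
    simp only [Finset.coe_filter, strongSet, Set.mem_setOf_eq, Finset.mem_univ, true_and] at hW
    intro i j _ hij hjt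
    exact hW i j hij hjt
  have hN : (2 ^ ℓ - (t + 1)) ^ w ≤ Nat.card ↥(WindowSet t ℓ w) := by
    have h1 : (2 ^ ℓ - t) ^ w ≤ (strongSet t ℓ w).card := strongSet_card t ℓ w
    have h2' : (strongSet t ℓ w).card ≤ Nat.card ↥(WindowSet t ℓ w) := by
      rw [Nat.card_coe_set_eq, ← Set.ncard_coe_finset (strongSet t ℓ w)]
      exact Set.ncard_le_ncard hsub (Set.toFinite _)
    refine le_trans (le_trans (Nat.pow_le_pow_left ?_ w) h1) h2'
    omega
  have hpos2 : (0 : ℝ) < 2 ^ ℓ := by positivity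
  have hlt : ((t : ℝ) + 1) < 2 ^ ℓ := by
    have := h2
    push_cast [← Nat.cast_pow]
    exact_mod_cast h2
  have hkey : (2 : ℝ) ^ (ℓ * w) * (1 - (t + 1) / 2 ^ ℓ) ^ w = ((2 : ℝ) ^ ℓ - (t + 1)) ^ w := by
    rw [pow_mul, ← mul_pow]
    congr 1
    field_simp
  have hcast : ((2 ^ ℓ - (t + 1) : ℕ) : ℝ) = (2 : ℝ) ^ ℓ - (t + 1) := by
    have hle : t + 1 ≤ 2 ^ ℓ := le_of_lt h2
    push_cast [Nat.cast_sub hle]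
    ring
  have hpart1 : (2 : ℝ) ^ (ℓ * w) * (1 - (t + 1) / 2 ^ ℓ) ^ w ≤
      (Nat.card ↥(WindowSet t ℓ w) : ℝ) := by
    rw [hkey]
    calc ((2 : ℝ) ^ ℓ - (t + 1)) ^ w = (((2 ^ ℓ - (t + 1)) ^ w : ℕ) : ℝ) := by
          rw [Nat.cast_pow, hcast]
      _ ≤ (Nat.card ↥(WindowSet t ℓ w) : ℝ) := by exact_mod_cast hN
  refine ⟨hpart1, ?_⟩
  -- part 2
  have hbpos : (0 : ℝ) < 1 - (t + 1) / 2 ^ ℓ := by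
    rw [sub_pos, div_lt_one hpos2]
    exact hlt
  have hApos : (0 : ℝ) < (2 : ℝ) ^ (ℓ * w) * (1 - (t + 1) / 2 ^ ℓ) ^ w := by positivity
  have hlog : Real.logb 2 ((2 : ℝ) ^ (ℓ * w) * (1 - (t + 1) / 2 ^ ℓ) ^ w) ≤
      Real.logb 2 (Nat.card ↥(WindowSet t ℓ w)) :=
    Real.logb_le_logb_of_le (by norm_num) hApos hpart1
  have hexp : Real.logb 2 ((2 : ℝ) ^ (ℓ * w) * (1 - (t + 1) / 2 ^ ℓ) ^ w) =
      (ℓ * w : ℝ) + w * Real.logb 2 (1 - (t + 1) / 2 ^ ℓ) := by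
    rw [Real.logb_mul (by positivity) (by positivity), Real.logb_pow, Real.logb_pow]
    have : Real.logb 2 2 = 1 := Real.logb_self_eq_one (by norm_num)
    rw [this]
    push_cast
    ring
  rw [hexp] at hlog
  linarith
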